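/- arXiv:2304.07339 — 6 statements merged into one kernel-verified Lean document; each statement's English description precedes it below -/
import Mathlib

section
/- Let d be a squarefree integer with d ≠ 1 and d ≠ -3, and let k be a positive integer. If there exist rational numbers X, Y ∈ ℚ with Y² = X³ - 432·d³·k², then there exist x, y, z in the ring of integers O_K of K = ℚ(√d) with x³ + y³ = k·z³ and x·y·z ≠ 0. -/
private lemma aux_identity (s dC kC m X Y : ℂ) (hs : s^2 = dC)
    (key : Y^2 = X^3 - 432*dC^3*kC^2) :
    (36*kC*dC*m*s + m*Y)^3 + (36*kC*dC*m*s - m*Y)^3 = kC * (6*m*X*s)^3 := by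
  linear_combination (216*kC*dC*m^3*s) * key + ((93312*kC^3*dC^3 - 216*kC*X^3)*m^3*s) * hs

private lemma rat_sq_int (q : ℚ) (n : ℤ) (h : q^2 = (n:ℚ)) : ∃ m : ℤ, m^2 = n := by
  have hint : IsIntegral ℤ q := by
    refine ⟨Polynomial.X^2 - Polynomial.C n, Polynomial.monic_X_pow_sub_C n (by norm_num), ?_⟩
    simp only [Polynomial.eval₂_sub, Polynomial.eval₂_X_pow, Polynomial.eval₂_C, h]
    simp [h]
  obtain ⟨m, hm⟩ := IsIntegrallyClosed.isIntegral_iff.mp hint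
  refine ⟨m, ?_⟩
  have : ((m:ℚ))^2 = (n:ℚ) := by rw [show ((m:ℚ)) = q from hm]; exact h
  exact_mod_cast this

/-- For a squarefree integer `d` with `d ≠ 1` and `d ≠ -3` and a positive integer `k`,
if there exist rational numbers `X, Y` with `Y² = X³ - 432·d³·k²`, then there exist
`x, y, z` in the ring of integers of `K = ℚ(√d)` (realised as elements of the subfield of
`ℂ` generated by a complex square root `s` of `d` which are integral over `ℤ`) with
`x³ + y³ = k·z³` and `x·y·z ≠ 0`. -/
theorem rational_point_implies_integral_solution (d : ℤ) (hd : Squarefree d)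
    (hd1 : d ≠ 1) (hd3 : d ≠ -3) (k : ℕ) (hk : 0 < k)
    (s : ℂ) (hs : s ^ 2 = (d : ℂ))
    (hpt : ∃ X Y : ℚ, Y ^ 2 = X ^ 3 - 432 * (d : ℚ) ^ 3 * (k : ℚ) ^ 2) :
    ∃ x y z : ℂ, x ∈ IntermediateField.adjoin ℚ {s} ∧
      y ∈ IntermediateField.adjoin ℚ {s} ∧ z ∈ IntermediateField.adjoin ℚ {s} ∧
      IsIntegral ℤ x ∧ IsIntegral ℤ y ∧ IsIntegral ℤ z ∧
      x ^ 3 + y ^ 3 = (k : ℂ) * z ^ 3 ∧ x * y * z ≠ 0 := by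
  obtain ⟨X, Y, hXY⟩ := hpt
  have hd0 : d ≠ 0 := hd.ne_zero
  have hk0 : (k : ℤ) ≠ 0 := by exact_mod_cast hk.ne'
  have hdQ : (d : ℚ) ≠ 0 := Int.cast_ne_zero.mpr hd0
  have hkQ : (k : ℚ) ≠ 0 := Nat.cast_ne_zero.mpr hk.ne'
  -- the key square fact, used to rule out d = 1: d cannot be a rational square
  have hd_not_sq : ∀ m : ℤ, m ^ 2 ≠ d := by
    intro m hm
    have : IsUnit m := hd m ⟨1, by rw [← hm]; ring⟩
    rcases Int.isUnit_iff.mp this with h | h <;> simp [h] at hm <;> exact hd1 hm.symm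
  -- s is nonzero
  have hs0 : s ≠ 0 := by
    intro h; apply hd0; have : (d : ℂ) = 0 := by rw [← hs, h]; ring
    exact_mod_cast this
  -- X is nonzero (else -3d would be a square)
  have hX0 : X ≠ 0 := by
    intro h
    subst h
    have hq : (Y / (12 * k * d)) ^ 2 = ((-3 * d : ℤ) : ℚ) := by
      field_simp
      push_cast; linear_combination hXY
    obtain ⟨m, hm⟩ := rat_sq_int _ _ hq
    have h3 : (3 : ℤ) ∣ m := by
      refine (Int.prime_three.dvd_mul.mp ?_).elim id id
      exact ⟨-d, by linarith [sq m ▸ hm]⟩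
    obtain ⟨n, rfl⟩ := h3
    have hdn : d = -3 * n ^ 2 := by nlinarith [hm]
    have : IsUnit n := hd n ⟨-3, by rw [hdn]; ring⟩
    rcases Int.isUnit_iff.mp this with h | h <;> rw [h] at hdn <;> norm_num at hdn <;>
      exact hd3 hdn
  -- set up the solution
  set A : ℤ := 36 * k * d * (X.den * Y.den) with hAdef
  set B : ℤ := X.den * Y.num with hBdef
  set Cz : ℤ := 6 * (Y.den * X.num) with hCdef
  have hXden : (X.den : ℚ) ≠ 0 := Nat.cast_ne_zero.mpr X.den_nz
  have hYden : (Y.den : ℚ) ≠ 0 := Nat.cast_ne_zero.mpr Y.den_nz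
  have hA0 : A ≠ 0 := by
    simp only [hAdef]
    refine mul_ne_zero (mul_ne_zero (mul_ne_zero (by norm_num) hk0) hd0) ?_
    exact_mod_cast mul_ne_zero (by exact_mod_cast hXden) (by exact_mod_cast hYden)
  have hC0 : Cz ≠ 0 := by
    simp only [hCdef]
    refine mul_ne_zero (by norm_num) (mul_ne_zero (by exact_mod_cast hYden) ?_)
    exact Rat.num_ne_zero.mpr hX0
  -- cast facts
  have hYnum : (Y.num : ℂ) = (Y : ℂ) * (Y.den : ℂ) := by
    have : (Y.num : ℚ) = Y * Y.den := by
      field_simp [Rat.num_div_den]; exact (Rat.mul_den_eq_num Y).symm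
    exact_mod_cast this
  have hXnum : (X.num : ℂ) = (X : ℂ) * (X.den : ℂ) := by
    have : (X.num : ℚ) = X * X.den := by
      field_simp [Rat.num_div_den]; exact (Rat.mul_den_eq_num X).symm
    exact_mod_cast this
  have key : (Y : ℂ)^2 = (X : ℂ)^3 - 432*(d : ℂ)^3*(k : ℂ)^2 := by exact_mod_cast hXY
  refine ⟨(A : ℂ) * s + (B : ℂ), (A : ℂ) * s - (B : ℂ), (Cz : ℂ) * s, ?_, ?_, ?_, ?_, ?_, ?_, ?_, ?_⟩
  -- memberships
  · exact add_mem (mul_mem (intCast_mem _ A) (IntermediateField.mem_adjoin_simple_self ℚ s))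
      (intCast_mem _ B)
  · exact sub_mem (mul_mem (intCast_mem _ A) (IntermediateField.mem_adjoin_simple_self ℚ s))
      (intCast_mem _ B)
  · exact mul_mem (intCast_mem _ Cz) (IntermediateField.mem_adjoin_simple_self ℚ s)
  -- integrality
  · have hsint : IsIntegral ℤ s := by
      refine ⟨Polynomial.X^2 - Polynomial.C d, Polynomial.monic_X_pow_sub_C d (by norm_num), ?_⟩
      simp only [Polynomial.eval₂_sub, Polynomial.eval₂_X_pow, Polynomial.eval₂_C]
      simp [hs]
    have hI : ∀ n : ℤ, IsIntegral ℤ ((n : ℂ)) := fun n => by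
      have : IsIntegral ℤ (algebraMap ℤ ℂ n) := isIntegral_algebraMap
      simpa using this
    exact ((hI A).mul hsint).add (hI B)
  · have hsint : IsIntegral ℤ s := by
      refine ⟨Polynomial.X^2 - Polynomial.C d, Polynomial.monic_X_pow_sub_C d (by norm_num), ?_⟩
      simp only [Polynomial.eval₂_sub, Polynomial.eval₂_X_pow, Polynomial.eval₂_C]
      simp [hs]
    have hI : ∀ n : ℤ, IsIntegral ℤ ((n : ℂ)) := fun n => by
      have : IsIntegral ℤ (algebraMap ℤ ℂ n) := isIntegral_algebraMap
      simpa using this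
    exact ((hI A).mul hsint).sub (hI B)
  · have hsint : IsIntegral ℤ s := by
      refine ⟨Polynomial.X^2 - Polynomial.C d, Polynomial.monic_X_pow_sub_C d (by norm_num), ?_⟩
      simp only [Polynomial.eval₂_sub, Polynomial.eval₂_X_pow, Polynomial.eval₂_C]
      simp [hs]
    have hI : ∀ n : ℤ, IsIntegral ℤ ((n : ℂ)) := fun n => by
      have : IsIntegral ℤ (algebraMap ℤ ℂ n) := isIntegral_algebraMap
      simpa using this
    exact (hI Cz).mul hsint
  -- the equation
  · have hA : (A : ℂ) = 36*(k:ℂ)*(d:ℂ)*((X.den:ℂ)*(Y.den:ℂ)) := by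
      simp only [hAdef]; push_cast; ring
    have hB : (B : ℂ) = ((X.den:ℂ)*(Y.den:ℂ)) * (Y:ℂ) := by
      simp only [hBdef]; push_cast [hYnum]; ring
    have hC : (Cz : ℂ) = 6*((X.den:ℂ)*(Y.den:ℂ))*(X:ℂ) := by
      simp only [hCdef]; push_cast [hXnum]; ring
    rw [hA, hB, hC]
    have := aux_identity s (d:ℂ) (k:ℂ) ((X.den:ℂ)*(Y.den:ℂ)) (X:ℂ) (Y:ℂ) hs key
    linear_combination this
  -- nontriviality
  · have hsq : ∀ B' : ℤ, (A : ℂ) * s = (B' : ℂ) → False := by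
      intro B' h
      have h2 : ((A:ℂ))^2 * (d:ℂ) = ((B':ℂ))^2 := by
        linear_combination ((A:ℂ)*s + (B':ℂ)) * h - (A:ℂ)^2 * hs
      have h3 : (A:ℤ)^2 * d = B'^2 := by exact_mod_cast h2
      have hAQ : (A : ℚ) ≠ 0 := Int.cast_ne_zero.mpr hA0
      have hq : ((B' : ℚ) / (A : ℚ)) ^ 2 = ((d : ℤ) : ℚ) := by
        have h4 : B'^2 = d * A^2 := by rw [← h3]; ring
        field_simp
        exact_mod_cast h4.trans (mul_comm _ _)
      obtain ⟨m, hm⟩ := rat_sq_int _ _ hq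
      exact hd_not_sq m hm
    refine mul_ne_zero (mul_ne_zero ?_ ?_) ?_
    · intro h
      exact hsq (-B) (by push_cast; linear_combination h)
    · intro h
      exact hsq B (by linear_combination h)
    · exact mul_ne_zero (Int.cast_ne_zero.mpr hC0) hs0
end

section
/- Let d be a squarefree integer, and let k be a positive cubefree integer with k ≠ 1. Then there is no element w ∈ K with w³ = k; that is, k is not a cube in ℚ(√d). -/
open Polynomial IntermediateField

/-- No rational cube root of a cubefree `k ≠ 1`. -/
lemma no_rat_cube_root (k : ℕ) (hk : 0 < k) (hkcf : ∀ p : ℕ, p.Prime → ¬ p ^ 3 ∣ k)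
    (hk1 : k ≠ 1) : ∀ b : ℚ, b ^ 3 ≠ (k : ℚ) := by
  intro b hb
  have hden : b.den = 1 := by
    have : (b ^ 3).den = 1 := by rw [hb]; exact Rat.den_natCast k
    rw [Rat.den_pow] at this
    rcases (pow_eq_one_iff (n := 3)).mp this |>.resolve_right (by norm_num) with h
    exact h
  have hb' : b = (b.num : ℚ) := by
    conv_lhs => rw [← Rat.num_div_den b, hden]
    simp
  have hnum : b.num ^ 3 = (k : ℤ) := by
    have : ((b.num ^ 3 : ℤ) : ℚ) = ((k : ℤ) : ℚ) := by push_cast; rw [← hb']; exact hb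
    exact_mod_cast this
  have hn3 : b.num.natAbs ^ 3 = k := by
    have := congrArg Int.natAbs hnum
    simpa [Int.natAbs_pow] using this
  have hn1 : b.num.natAbs ≠ 1 := by intro h; rw [h] at hn3; simp at hn3; omega
  obtain ⟨p, hp, hpn⟩ := Nat.exists_prime_and_dvd hn1
  exact hkcf p hp (hn3 ▸ pow_dvd_pow_of_dvd hpn 3)

/-- Let `d` be a squarefree integer and `k` a positive cubefree integer with `k ≠ 1`.
Then `k` is not a cube in `K = ℚ(√d)` (realised as the subfield of `ℂ` generated by a
complex square root `s` of `d`). -/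
theorem cubefree_not_cube_in_quadratic_field (d : ℤ) (hd : Squarefree d)
    (k : ℕ) (hk : 0 < k) (hkcf : ∀ p : ℕ, p.Prime → ¬ p ^ 3 ∣ k) (hk1 : k ≠ 1)
    (s : ℂ) (hs : s ^ 2 = (d : ℂ)) :
    ¬ ∃ w : ℂ, w ∈ IntermediateField.adjoin ℚ {s} ∧ w ^ 3 = (k : ℂ) := by
  rintro ⟨w, hwK, hw3⟩
  set K := IntermediateField.adjoin ℚ {s} with hK
  -- s is integral over ℚ
  have hsint : IsIntegral ℚ s := by
    refine ⟨X ^ 2 - C (d : ℚ), monic_X_pow_sub_C _ (by norm_num), ?_⟩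
    simp only [eval₂_sub, eval₂_pow, eval₂_X, eval₂_C, hs]
    norm_num
  haveI : FiniteDimensional ℚ K := IntermediateField.adjoin.finiteDimensional hsint
  -- finrank ℚ K ≤ 2
  have hrank : Module.finrank ℚ K ≤ 2 := by
    rw [hK, IntermediateField.adjoin.finrank hsint]
    have h2 : (minpoly ℚ s).degree ≤ (X ^ 2 - C (d : ℚ)).degree :=
      minpoly.degree_le_of_ne_zero ℚ s (X_pow_sub_C_ne_zero (by norm_num) _)
        (by rw [map_sub, map_pow, aeval_X, aeval_C, hs]; norm_num)
    have : (X ^ 2 - C (d : ℚ)).degree = 2 := degree_X_pow_sub_C (by norm_num) _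
    rw [this] at h2
    exact natDegree_le_iff_degree_le.mpr h2
  -- the element w inside K
  set w' : K := ⟨w, hwK⟩ with hw'
  have hw'3 : w' ^ 3 = (k : K) := by
    apply Subtype.ext
    push_cast
    exact hw3
  have hirr : Irreducible (X ^ 3 - C (k : ℚ)) :=
    X_pow_sub_C_irreducible_of_prime (by norm_num : Nat.Prime 3)
      (no_rat_cube_root k hk hkcf hk1)
  have haev : Polynomial.aeval w' (X ^ 3 - C (k : ℚ)) = 0 := by
    simp [hw'3]
  have hmp : minpoly ℚ w' = X ^ 3 - C (k : ℚ) :=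
    (minpoly.eq_of_irreducible_of_monic hirr haev (monic_X_pow_sub_C _ (by norm_num))).symm
  have hwint : IsIntegral ℚ w' := ⟨X ^ 3 - C (k : ℚ), monic_X_pow_sub_C _ (by norm_num), haev⟩
  have hdvd : (minpoly ℚ w').natDegree ∣ Module.finrank ℚ K := minpoly.degree_dvd hwint
  rw [hmp] at hdvd
  have h3 : (X ^ 3 - C (k : ℚ)).natDegree = 3 := by
    rw [natDegree_X_pow_sub_C]
  rw [h3] at hdvd
  have hpos : 0 < Module.finrank ℚ K := Module.finrank_pos
  omega
end

section
/- The torsion subgroup of the group of rational points of the elliptic curve y² = x³ - 432 over ℚ (which is the curve y² = x³ - 432·d³·k² with d = 1 and k = 1) is isomorphic to ℤ/3ℤ. -/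
open WeierstrassCurve.Affine WeierstrassCurve.Affine.Point

private def W432 : WeierstrassCurve.Affine ℚ :=
  { a₁ := 0, a₂ := 0, a₃ := 0, a₄ := 0, a₆ := -432 }

private lemma W432_equation_iff (x y : ℚ) : W432.Equation x y ↔ y ^ 2 = x ^ 3 - 432 := by
  rw [WeierstrassCurve.Affine.equation_iff]
  show y ^ 2 + 0 * x * y + 0 * y = x ^ 3 + 0 * x ^ 2 + 0 * x + -432 ↔ _
  constructor <;> intro h <;> linarith

private lemma W432_nonsingular {x y : ℚ} (h : y ^ 2 = x ^ 3 - 432) : W432.Nonsingular x y := by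
  rw [WeierstrassCurve.Affine.nonsingular_iff]
  refine ⟨(W432_equation_iff x y).mpr h, ?_⟩
  show 0 * y ≠ 3 * x ^ 2 + 2 * 0 * x + 0 ∨ y ≠ -y - 0 * x - 0
  by_cases hy : y = 0
  · left
    intro hc
    rw [hy] at h
    have hx : x ^ 2 = 0 := by linarith
    have : x = 0 := by
      have := sq_eq_zero_iff.mp hx
      exact this
    rw [this] at h; norm_num at h
  · right
    intro hc
    apply hy
    linarith

private lemma hP12 : W432.Nonsingular 12 36 := W432_nonsingular (by norm_num)

private noncomputable def P0 : W432.Point := Point.some _ _ hP12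

private lemma some_eq_some {x₁ y₁ x₂ y₂ : ℚ} (h₁ : W432.Nonsingular x₁ y₁)
    (h₂ : W432.Nonsingular x₂ y₂) (hx : x₁ = x₂) (hy : y₁ = y₂) : Point.some _ _ h₁ = Point.some _ _ h₂ := by
  subst hx; subst hy; rfl

private lemma negY_eq (x y : ℚ) : W432.negY x y = -y := by
  show -y - 0 * x - 0 = -y; ring

private lemma neg_P0 : -P0 = Point.some _ _ (W432_nonsingular (x := 12) (y := -36) (by norm_num)) := by
  rw [show P0 = Point.some _ _ hP12 from rfl, neg_some]
  exact some_eq_some _ _ rfl (negY_eq 12 36)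

private lemma classify (Q : W432.Point) : Q = 0 ∨ Q = P0 ∨ Q = -P0 := by
  rcases Q with _ | @⟨x, y, h⟩
  · exact Or.inl rfl
  · right
    have heq : y ^ 2 = x ^ 3 - 432 := (W432_equation_iff x y).mp h.1
    have flt : FermatLastTheoremWith ℚ 3 :=
      fermatLastTheoremFor_iff_rat.mp fermatLastTheoremThree
    have hx0 : x ≠ 0 := by
      rintro rfl
      nlinarith [sq_nonneg y]
    have hab : (36 + y) ^ 3 + (36 - y) ^ 3 = (6 * x) ^ 3 := by linear_combination 216 * heq
    have hor : 36 + y = 0 ∨ 36 - y = 0 := by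
      by_contra hc
      push_neg at hc
      exact flt _ _ _ hc.1 hc.2 (mul_ne_zero (by norm_num) hx0) hab
    have hx12 : x = 12 := by
      have hy2 : y ^ 2 = 1296 := by
        rcases hor with h' | h' <;> nlinarith
      have hfac : (x - 12) * ((x + 6) ^ 2 + 108) = 0 := by linear_combination hy2 - heq
      have hpos : ((x + 6) ^ 2 + 108 : ℚ) ≠ 0 := by positivity
      have := mul_eq_zero.mp hfac
      rcases this with h' | h'
      · linarith
      · exact absurd h' hpos
    subst hx12
    rcases hor with h' | h'
    · right
      rw [neg_P0]
      exact some_eq_some _ _ rfl (by linarith)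
    · left
      exact some_eq_some _ _ rfl (by linarith)

private lemma P0_ne_zero : P0 ≠ 0 := some_ne_zero _

private lemma two_P0 : P0 + P0 = -P0 := by
  rcases classify (P0 + P0) with h | h | h
  · exfalso
    have h2 : P0 = -P0 := by
      rw [eq_neg_iff_add_eq_zero]; exact h
    rw [neg_P0, show P0 = Point.some _ _ hP12 from rfl] at h2
    injection h2 with h1 h2'
    norm_num at h2'
  · exfalso
    apply P0_ne_zero
    have : P0 + P0 = P0 + 0 := by rw [h, add_zero]
    exact add_left_cancel this
  · exact h

private lemma three_nsmul_P0 : (3 : ℕ) • P0 = 0 := by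
  have : (3 : ℕ) • P0 = P0 + P0 + P0 := by
    rw [succ_nsmul, two_nsmul]
  rw [this, two_P0, neg_add_cancel]

private lemma three_nsmul_all (Q : W432.Point) : (3 : ℕ) • Q = 0 := by
  rcases classify Q with h | h | h <;> subst h
  · exact nsmul_zero 3
  · exact three_nsmul_P0
  · rw [neg_nsmul, three_nsmul_P0, _root_.neg_zero]

private lemma three_zsmul_P0 : (3 : ℤ) • P0 = 0 := by
  have : ((3 : ℕ) : ℤ) • P0 = (3 : ℕ) • P0 := natCast_zsmul P0 3
  simpa using this.trans three_nsmul_P0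

private noncomputable def f : ZMod 3 →+ W432.Point :=
  ZMod.lift 3 ⟨zmultiplesHom _ P0, three_zsmul_P0⟩

private lemma f_one : f 1 = P0 := by
  have : f ((1 : ℤ) : ZMod 3) = (1 : ℤ) • P0 := ZMod.lift_coe 3 _ 1
  simpa using this

private lemma f_two : f 2 = -P0 := by
  have : f ((2 : ℤ) : ZMod 3) = (2 : ℤ) • P0 := ZMod.lift_coe 3 _ 2
  rw [show ((2 : ℤ) : ZMod 3) = 2 by norm_num] at this
  rw [this, show (2 : ℤ) • P0 = P0 + P0 from two_zsmul P0, two_P0]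

private lemma f_bij : Function.Bijective f := by
  constructor
  · rw [injective_iff_map_eq_zero]
    intro a ha
    have h3 : ∀ b : ZMod 3, b = 0 ∨ b = 1 ∨ b = 2 := by decide
    rcases h3 a with rfl | rfl | rfl
    · rfl
    · rw [f_one] at ha; exact absurd ha P0_ne_zero
    · rw [f_two] at ha
      exact absurd (neg_eq_zero.mp ha) P0_ne_zero
  · intro Q
    rcases classify Q with h | h | h
    · exact ⟨0, by rw [h]; exact _root_.map_zero f⟩
    · exact ⟨1, by rw [f_one, h]⟩
    · exact ⟨2, by rw [f_two, h]⟩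

private lemma torsion_top : AddCommGroup.torsion W432.Point = ⊤ := by
  rw [AddSubgroup.eq_top_iff']
  intro Q
  exact isOfFinAddOrder_iff_nsmul_eq_zero.mpr ⟨3, by norm_num, three_nsmul_all Q⟩

/-- The torsion subgroup of the group of rational points of the elliptic curve
`y² = x³ - 432` over `ℚ` is isomorphic to `ℤ/3ℤ`. -/
theorem torsion_of_neg_432 :
    let W : WeierstrassCurve.Affine ℚ :=
      { a₁ := 0, a₂ := 0, a₃ := 0, a₄ := 0, a₆ := -432 }
    Nonempty (AddCommGroup.torsion W.Point ≃+ ZMod 3) := by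
  intro W
  exact ⟨((AddEquiv.addSubgroupCongr torsion_top).trans AddSubgroup.topEquiv).trans
    (AddEquiv.ofBijective f f_bij).symm⟩
end

section
/- Let d be a squarefree integer and k a positive cubefree integer such that d ≠ -3, k ≠ 2, and not (d = 1策 and k = 1). Then the group of rational points of the elliptic curve y² = x³ - 432·d³·k² over ℚ has trivial torsion subgroup; that is, the only rational point of finite order is the point at infinity. -/
set_option linter.unusedSectionVars false
set_option maxHeartbeats 1600000
open WeierstrassCurve

namespace TT

variable {p : ℕ} [Fact p.Prime]

/-- `r` is `p`-integral. -/
def PInt (p : ℕ) (r : ℚ) : Prop := ¬ p ∣ r.den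

lemma PInt.den_ne {r : ℚ} (h : PInt p r) : ((r.den : ℕ) : ZMod p) ≠ 0 := by
  simpa [ZMod.natCast_eq_zero_iff, PInt] using h

lemma pint_int (n : ℤ) : PInt p (n : ℚ) := by
  simp [PInt, Rat.den_intCast, Nat.Prime.one_lt (Fact.out : p.Prime)]
  exact Nat.Prime.one_lt (Fact.out : p.Prime) |>.ne'

lemma PInt.add {a b : ℚ} (ha : PInt p a) (hb : PInt p b) : PInt p (a + b) := by
  intro h
  rcases (Nat.Prime.dvd_mul (Fact.out : p.Prime)).mp (h.trans (Rat.add_den_dvd a b)) with h' | h'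
  exacts [ha h', hb h']

lemma PInt.mul {a b : ℚ} (ha : PInt p a) (hb : PInt p b) : PInt p (a * b) := by
  intro h
  rcases (Nat.Prime.dvd_mul (Fact.out : p.Prime)).mp (h.trans (Rat.mul_den_dvd a b)) with h' | h'
  exacts [ha h', hb h']

lemma PInt.neg {a : ℚ} (ha : PInt p a) : PInt p (-a) := by
  simpa [PInt] using ha

lemma PInt.sub {a b : ℚ} (ha : PInt p a) (hb : PInt p b) : PInt p (a - b) := by
  simpa [sub_eq_add_neg] using ha.add hb.neg

lemma PInt.inv {b : ℚ} (hnum : ¬ (p : ℤ) ∣ b.num) : PInt p b⁻¹ := by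
  intro h
  apply hnum
  have := Rat.den_dvd (b.den : ℤ) b.num
  rw [← Rat.inv_def] at this
  exact dvd_trans (Int.natCast_dvd_natCast.mpr h) this

lemma PInt.div {a b : ℚ} (ha : PInt p a) (hnum : ¬ (p : ℤ) ∣ b.num) : PInt p (a / b) := by
  rw [div_eq_mul_inv]; exact ha.mul (PInt.inv hnum)

lemma cast_add {a b : ℚ} (ha : PInt p a) (hb : PInt p b) :
    ((a + b : ℚ) : ZMod p) = (a : ZMod p) + (b : ZMod p) :=
  Rat.cast_add_of_ne_zero ha.den_ne hb.den_ne

lemma cast_mul {a b : ℚ} (ha : PInt p a) (hb : PInt p b) :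
    ((a * b : ℚ) : ZMod p) = (a : ZMod p) * (b : ZMod p) :=
  Rat.cast_mul_of_ne_zero ha.den_ne hb.den_ne

lemma cast_sub {a b : ℚ} (ha : PInt p a) (hb : PInt p b) :
    ((a - b : ℚ) : ZMod p) = (a : ZMod p) - (b : ZMod p) := by
  rw [sub_eq_add_neg, cast_add ha hb.neg, Rat.cast_neg, sub_eq_add_neg]

lemma cast_div {a b : ℚ} (ha : PInt p a) (hnum : ¬ (p : ℤ) ∣ b.num) :
    ((a / b : ℚ) : ZMod p) = (a : ZMod p) / (b : ZMod p) := by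
  refine Rat.cast_div_of_ne_zero ha.den_ne ?_
  simpa [ZMod.intCast_zmod_eq_zero_iff_dvd] using hnum

lemma cast_ne_zero {a : ℚ} (ha : PInt p a) (hnum : ¬ (p : ℤ) ∣ a.num) :
    (a : ZMod p) ≠ 0 := by
  rw [Rat.cast_def]
  refine div_ne_zero ?_ ha.den_ne
  simpa [ZMod.intCast_zmod_eq_zero_iff_dvd] using hnum

lemma cast_num_div_den (a : ℚ) : (a : ZMod p) = (a.num : ZMod p) / (a.den : ZMod p) :=
  Rat.cast_def a


lemma int_of_pow {z : ℚ} {n : ℤ} {e : ℕ} (he : e ≠ 0) (h : z ^ e = (n : ℚ)) :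
    ∃ t : ℤ, (t : ℚ) = z := by
  have hd : z.den ^ e = 1 := by rw [← Rat.den_pow, h, Rat.den_intCast]
  have hd1 : z.den = 1 := (pow_eq_one_iff_left he).mp hd
  refine ⟨z.num, ?_⟩
  rw [← Rat.num_div_den z, hd1]
  simp

lemma fact432 : (432 : ℕ).factorization = Finsupp.single 2 4 + Finsupp.single 3 3 := by
  have : (432 : ℕ) = 2 ^ 4 * 3 ^ 3 := by norm_num
  rw [this, Nat.factorization_mul (by norm_num) (by norm_num),
    Nat.Prime.factorization_pow (by norm_num), Nat.Prime.factorization_pow (by norm_num)]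

lemma nat_factorization_eq_one {m : ℕ} (hm : m ≠ 0) (n : ℕ)
    (h : ∀ r : ℕ, r.Prime → m.factorization r = (n : ℕ).factorization r) (hn : n ≠ 0) : m = n := by
  refine Nat.factorization_inj (by simpa using hm) (by simpa using hn) ?_
  ext r
  rcases em r.Prime with hr | hr
  · exact h r hr
  · rw [Nat.factorization_eq_zero_of_not_prime _ hr,
      Nat.factorization_eq_zero_of_not_prime _ hr]

lemma k_eq_two {c d : ℤ} {k : ℕ} (hd : Squarefree d) (hk : 0 < k)
    (hkcf : ∀ p : ℕ, p.Prime → ¬ p ^ 3 ∣ k) (h : c ^ 3 = 432 * d ^ 3 * (k : ℤ) ^ 2) : k = 2 := by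
  have hd0 : d ≠ 0 := hd.ne_zero
  have hm : d.natAbs ≠ 0 := by simpa using hd0
  have hk0 : k ≠ 0 := hk.ne'
  have hsf : Squarefree d.natAbs := Int.squarefree_natAbs.mpr hd
  have hn : c.natAbs ^ 3 = 432 * d.natAbs ^ 3 * k ^ 2 := by
    have := congrArg Int.natAbs h
    simpa [Int.natAbs_mul, Int.natAbs_pow] using this
  have key : ∀ r : ℕ, r.Prime →
      3 * c.natAbs.factorization r =
        (432 : ℕ).factorization r + 3 * d.natAbs.factorization r + 2 * k.factorization r := by
    intro r hr
    have := congrArg (fun n => n.factorization r) hn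
    simpa [Nat.factorization_mul, Nat.factorization_pow, hm, hk0, mul_ne_zero,
      pow_ne_zero, (by norm_num : (432:ℕ) ≠ 0)] using this
  refine nat_factorization_eq_one hk0 2 (fun r hr => ?_) (by norm_num)
  have h1 := key r hr
  have h2 : k.factorization r ≤ 2 := by
    by_contra hcon
    exact hkcf r hr ((Nat.Prime.pow_dvd_iff_le_factorization hr hk0).mpr (by omega))
  have h3 : d.natAbs.factorization r ≤ 1 := hsf.natFactorization_le_one r
  rw [Nat.Prime.factorization (p := 2) (by norm_num)]
  rw [fact432] at h1
  simp only [Finsupp.add_apply, Finsupp.single_apply] at h1 ⊢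
  rcases eq_or_ne r 2 with rfl | hr2
  · rw [if_pos rfl, if_neg (by norm_num)] at h1
    rw [if_pos rfl]
    omega
  · rw [if_neg (Ne.symm hr2)] at h1
    rw [if_neg (Ne.symm hr2)]
    rcases eq_or_ne r 3 with rfl | hr3
    · rw [if_pos rfl] at h1
      omega
    · rw [if_neg (Ne.symm hr3)] at h1
      omega

lemma d_eq_neg_three {t d : ℤ} (hd : Squarefree d) (h : t ^ 2 = -27 * d ^ 3) : d = -3 := by
  have hd0 : d ≠ 0 := hd.ne_zero
  have hm : d.natAbs ≠ 0 := by simpa using hd0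
  have hsf : Squarefree d.natAbs := Int.squarefree_natAbs.mpr hd
  have hn : t.natAbs ^ 2 = 27 * d.natAbs ^ 3 := by
    have := congrArg Int.natAbs h
    simpa [Int.natAbs_mul, Int.natAbs_pow] using this
  have key : ∀ r : ℕ, r.Prime →
      2 * t.natAbs.factorization r =
        (27 : ℕ).factorization r + 3 * d.natAbs.factorization r := by
    intro r hr
    have := congrArg (fun n => n.factorization r) hn
    simpa [Nat.factorization_mul, Nat.factorization_pow, hm, pow_ne_zero,
      (by norm_num : (27:ℕ) ≠ 0)] using this
  have h27 : (27 : ℕ) = 3 ^ 3 := by norm_num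
  have habs : d.natAbs = 3 := by
    refine nat_factorization_eq_one hm 3 (fun r hr => ?_) (by norm_num)
    have h1 := key r hr
    have h3 : d.natAbs.factorization r ≤ 1 := hsf.natFactorization_le_one r
    rw [Nat.Prime.factorization (p := 3) (by norm_num)]
    rw [h27, Nat.Prime.factorization_pow (by norm_num)] at h1
    simp only [Finsupp.single_apply] at h1 ⊢
    rcases eq_or_ne r 3 with rfl | hr3
    · rw [if_pos rfl] at h1
      rw [if_pos rfl]
      omega
    · rw [if_neg (Ne.symm hr3)] at h1
      rw [if_neg (Ne.symm hr3)]
      omega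
  have : d = 3 ∨ d = -3 := by omega
  rcases this with rfl | rfl
  · exfalso; nlinarith [sq_nonneg t]
  · rfl

lemma k_eq_one {c : ℤ} {k : ℕ} (hk : 0 < k)
    (hkcf : ∀ p : ℕ, p.Prime → ¬ p ^ 3 ∣ k) (h : c ^ 3 = (k : ℤ) ^ 2) : k = 1 ∧ c = 1 := by
  have hk0 : k ≠ 0 := hk.ne'
  have hkz : (0 : ℤ) < (k : ℤ) ^ 2 := by positivity
  have hcpos : 0 < c := by
    rcases lt_trichotomy c 0 with h' | h' | h'
    · exfalso
      have hc : (0:ℤ) < -c := by omega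
      nlinarith [mul_pos (mul_pos hc hc) hc, hkz]
    · exfalso; rw [h'] at h; simp at h; exact absurd h.symm (by positivity)
    · exact h'
  have hn : c.natAbs ^ 3 = k ^ 2 := by
    have := congrArg Int.natAbs h
    simpa [Int.natAbs_pow] using this
  have hk1 : k = 1 := by
    refine nat_factorization_eq_one hk0 1 (fun r hr => ?_) (by norm_num)
    have := congrArg (fun n => n.factorization r) hn
    simp only [Nat.factorization_pow, Finsupp.smul_apply, smul_eq_mul] at this
    have h2 : k.factorization r ≤ 2 := by
      by_contra hcon
      exact hkcf r hr ((Nat.Prime.pow_dvd_iff_le_factorization hr hk0).mpr (by omega))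
    simp only [Nat.factorization_one, Finsupp.coe_zero, Pi.zero_apply]
    omega
  subst hk1
  refine ⟨rfl, ?_⟩
  norm_num at h
  rcases lt_or_ge c 2 with h' | h'
  · omega
  · exfalso
    have : (2:ℤ) ^ 3 ≤ c ^ 3 := pow_le_pow_left₀ (by norm_num) h' 3
    omega

lemma d_eq_one {t d : ℤ} (hd : Squarefree d) (h : t ^ 2 = d ^ 3) : d = 1 := by
  have hd0 : d ≠ 0 := hd.ne_zero
  have hm : d.natAbs ≠ 0 := by simpa using hd0
  have hsf : Squarefree d.natAbs := Int.squarefree_natAbs.mpr hd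
  have hn : t.natAbs ^ 2 = d.natAbs ^ 3 := by
    have := congrArg Int.natAbs h
    simpa [Int.natAbs_pow] using this
  have habs : d.natAbs = 1 := by
    refine nat_factorization_eq_one hm 1 (fun r hr => ?_) (by norm_num)
    have := congrArg (fun n => n.factorization r) hn
    simp only [Nat.factorization_pow, Finsupp.smul_apply, smul_eq_mul] at this
    have h3 : d.natAbs.factorization r ≤ 1 := hsf.natFactorization_le_one r
    simp only [Nat.factorization_one, Finsupp.coe_zero, Pi.zero_apply]
    omega
  have : d = 1 ∨ d = -1 := by omega
  rcases this with rfl | rfl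
  · rfl
  · exfalso; nlinarith [sq_nonneg t]


lemma some_congr {F : Type*} [CommRing F] {W : Affine F} {x₁ y₁ x₂ y₂ : F}
    (hx : x₁ = x₂) (hy : y₁ = y₂) (h₁ : W.Nonsingular x₁ y₁) (h₂ : W.Nonsingular x₂ y₂) :
    Affine.Point.some _ _ h₁ = Affine.Point.some _ _ h₂ := by
  subst hx; subst hy; rfl

variable {p : ℕ} [Fact p.Prime]

lemma p_ge_five (hp3 : p % 3 = 2) (hp2 : p ≠ 2) : 5 ≤ p := by
  have hp : p.Prime := Fact.out
  have h2 := hp.two_le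
  have h3 : p ≠ 3 := by rintro rfl; omega
  omega

/-- cube root exponent -/
lemma exists_cube_root_exp (hp3 : p % 3 = 2) (hp2 : p ≠ 2) :
    ∃ e : ℕ, ∀ z : ZMod p, (z ^ e) ^ 3 = z := by
  have hp : p.Prime := Fact.out
  have hp1 : 1 < p - 1 := by have := p_ge_five hp3 hp2; omega
  have hmod : (p - 1) % 3 = 1 := by have := p_ge_five hp3 hp2; omega
  have hco : Nat.Coprime 3 (p - 1) := by
    rw [Nat.Coprime, Nat.gcd_rec, hmod]
    rfl
  obtain ⟨e, -, he⟩ := Nat.exists_mul_mod_eq_one_of_coprime hco hp1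
  refine ⟨e, fun z => ?_⟩
  have he0 : e ≠ 0 := by rintro rfl; simp at he
  rcases eq_or_ne z 0 with rfl | hz
  · rw [zero_pow he0, zero_pow (by norm_num)]
  · have h1 : z ^ (p - 1) = 1 := ZMod.pow_card_sub_one_eq_one hz
    have hdm : 3 * e = (p - 1) * (3 * e / (p - 1)) + 1 := by
      have := Nat.div_add_mod (3 * e) (p - 1)
      omega
    have : (z ^ e) ^ 3 = z ^ (3 * e) := by rw [← pow_mul, mul_comm]
    rw [this, hdm, pow_add, pow_mul, h1, one_pow, one_mul, pow_one]

lemma cube_inj (hp3 : p % 3 = 2) (hp2 : p ≠ 2) {u v : ZMod p} (h : u ^ 3 = v ^ 3) : u = v := by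
  obtain ⟨e, he⟩ := exists_cube_root_exp hp3 hp2
  have hu : (u ^ 3) ^ e = u := by rw [← pow_mul, mul_comm, pow_mul, he]
  have hv : (v ^ 3) ^ e = v := by rw [← pow_mul, mul_comm, pow_mul, he]
  rw [← hu, h, hv]

variable (B : ZMod p)

/-- The reduced curve. -/
def Ebar : WeierstrassCurve.Affine (ZMod p) :=
  { a₁ := 0, a₂ := 0, a₃ := 0, a₄ := 0, a₆ := B }

lemma Ebar_equation_iff (x y : ZMod p) :
    (Ebar B).Equation x y ↔ y ^ 2 = x ^ 3 + B := by
  rw [Affine.equation_iff]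
  simp [Ebar]

lemma two_ne_zero' (hp2 : p ≠ 2) : (2 : ZMod p) ≠ 0 := by
  have hp : p.Prime := Fact.out
  have : ((2 : ℕ) : ZMod p) ≠ 0 := by
    rw [Ne, ZMod.natCast_eq_zero_iff]
    intro hd
    have := (Nat.prime_dvd_prime_iff_eq hp (by norm_num)).mp hd
    exact hp2 this
  simpa using this

lemma three_ne_zero' (hp3 : p % 3 = 2) : (3 : ZMod p) ≠ 0 := by
  have hp : p.Prime := Fact.out
  have : ((3 : ℕ) : ZMod p) ≠ 0 := by
    rw [Ne, ZMod.natCast_eq_zero_iff]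
    intro hd
    have := (Nat.prime_dvd_prime_iff_eq hp (by norm_num)).mp hd
    omega
  simpa using this

lemma Ebar_nonsingular (hp3 : p % 3 = 2) (hp2 : p ≠ 2) (hB : B ≠ 0) {x y : ZMod p}
    (h : (Ebar B).Equation x y) : (Ebar B).Nonsingular x y := by
  rw [Affine.nonsingular_iff]
  refine ⟨h, ?_⟩
  rw [Ebar_equation_iff] at h
  rcases eq_or_ne y 0 with rfl | hy
  · left
    have hx : x ≠ 0 := by
      intro hx0
      apply hB
      simpa [hx0] using h.symm
    simp only [Ebar]
    intro hc
    simp at hc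
    rcases hc with hc | hc
    exacts [three_ne_zero' hp3 hc, hx hc]
  · right
    simp only [Affine.negY, Ebar]
    intro hc
    apply hy
    have h2y : (2 : ZMod p) * y = 0 := by linear_combination hc
    rcases mul_eq_zero.mp h2y with hc' | hc'
    exacts [absurd hc' (two_ne_zero' hp2), hc']

noncomputable def pointEquiv (hp3 : p % 3 = 2) (hp2 : p ≠ 2) (hB : B ≠ 0) :
    (Ebar B).Point ≃ Option (ZMod p) where
  toFun P := match P with
    | .zero => none
    | @Affine.Point.some _ _ _ x y _ => some y
  invFun o := match o with
    | none => 0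
    | some y => Affine.Point.some
        (x := ((y ^ 2 - B) ^ (Classical.choose (exists_cube_root_exp hp3 hp2)))) (y := y)
        (by
          apply Ebar_nonsingular B hp3 hp2 hB
          rw [Ebar_equation_iff]
          rw [Classical.choose_spec (exists_cube_root_exp hp3 hp2) (y ^ 2 - B)]
          ring)
  left_inv P := by
    cases P with
    | zero => rfl
    | @some x y h =>
      have heq : (y ^ 2 - B) ^ (Classical.choose (exists_cube_root_exp hp3 hp2)) = x := by
        have hx : y ^ 2 - B = x ^ 3 := by
          have := (Ebar_equation_iff B x y).mp h.1
          linear_combination this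
        rw [hx, ← pow_mul, mul_comm, pow_mul,
          Classical.choose_spec (exists_cube_root_exp hp3 hp2) x]
      exact some_congr heq rfl _ _
  right_inv o := by cases o <;> rfl

lemma card_Ebar (hp3 : p % 3 = 2) (hp2 : p ≠ 2) (hB : B ≠ 0) :
    Nat.card (Ebar B).Point = p + 1 := by
  have : Nat.card (Ebar B).Point = Nat.card (Option (ZMod p)) :=
    Nat.card_congr (pointEquiv B hp3 hp2 hB)
  rw [this]
  letI : Fintype (Option (ZMod p)) := inferInstance
  rw [Nat.card_eq_fintype_card, Fintype.card_option, ZMod.card]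


variable {p : ℕ} [Fact p.Prime]

lemma PInt.pow {a : ℚ} (ha : PInt p a) (n : ℕ) : PInt p (a ^ n) := by
  induction n with
  | zero => simpa [PInt] using (pint_int 1 : PInt p ((1 : ℤ) : ℚ))
  | succ n ih => rw [pow_succ]; exact ih.mul ha

lemma cast_pow {a : ℚ} (ha : PInt p a) (n : ℕ) :
    ((a ^ n : ℚ) : ZMod p) = (a : ZMod p) ^ n := by
  induction n with
  | zero => simp
  | succ n ih => rw [pow_succ, cast_mul (ha.pow n) ha, ih, pow_succ]

lemma cast_eq_zero_of_dvd_num {a : ℚ} (h : (p : ℤ) ∣ a.num) : (a : ZMod p) = 0 := by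
  rw [Rat.cast_def]
  have : ((a.num : ℤ) : ZMod p) = 0 := by
    rw [ZMod.intCast_zmod_eq_zero_iff_dvd]; exact_mod_cast h
  rw [this, zero_div]

lemma pint_den_one {a : ℚ} (h : a.den = 1) : PInt p a := by
  rw [PInt, h, Nat.dvd_one]
  exact Nat.Prime.one_lt (Fact.out : p.Prime) |>.ne'

lemma pint_three : PInt p (3 : ℚ) := pint_den_one rfl

lemma not_dvd_num_of_cast_ne {a : ℚ} (h : (a : ZMod p) ≠ 0) : ¬ (p : ℤ) ∣ a.num :=
  fun hd => h (cast_eq_zero_of_dvd_num hd)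

section Curve

variable {A : ℤ} {W : Affine ℚ}

lemma WQ_negY (hW1 : W.a₁ = 0) (hW3 : W.a₃ = 0) (x y : ℚ) : W.negY x y = -y := by simp [Affine.negY, hW1, hW3]

lemma WQ_equation_iff (hW1 : W.a₁ = 0) (hW2 : W.a₂ = 0) (hW3 : W.a₃ = 0) (hW4 : W.a₄ = 0) (hW6 : W.a₆ = (A : ℚ)) (x y : ℚ) : W.Equation x y ↔ y ^ 2 = x ^ 3 + (A : ℚ) := by
  rw [Affine.equation_iff, hW1, hW2, hW3, hW4, hW6]
  constructor <;> intro h <;> linarith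

lemma Ebar_negY (B : ZMod p) (x y : ZMod p) : (Ebar B).negY x y = -y := by
  simp [Affine.negY, Ebar]

lemma cast_equation (hW1 : W.a₁ = 0) (hW2 : W.a₂ = 0) (hW3 : W.a₃ = 0) (hW4 : W.a₄ = 0) (hW6 : W.a₆ = (A : ℚ)) {x y : ℚ} (hx : PInt p x) (hy : PInt p y) (h : W.Equation x y) :
    (Ebar ((A : ZMod p))).Equation (x : ZMod p) (y : ZMod p) := by
  rw [WQ_equation_iff hW1 hW2 hW3 hW4 hW6] at h
  rw [Ebar_equation_iff]
  calc ((y : ZMod p)) ^ 2 = ((y ^ 2 : ℚ) : ZMod p) := (cast_pow hy 2).symm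
  _ = ((x ^ 3 + (A : ℚ) : ℚ) : ZMod p) := by rw [h]
  _ = ((x : ZMod p)) ^ 3 + ((A : ℤ) : ZMod p) := by
      rw [cast_add (hx.pow 3) (pint_int A), cast_pow hx 3, Rat.cast_intCast]

open Classical in
noncomputable def redp (A : ℤ) (p : ℕ) [Fact p.Prime] {W : Affine ℚ} :
    W.Point → (Ebar (p := p) ((A : ZMod p))).Point
  | .zero => 0
  | @Affine.Point.some _ _ _ x y _ =>
      if hh : (Ebar (p := p) ((A : ZMod p))).Nonsingular (x : ZMod p) (y : ZMod p)
      then .some _ _ hh else 0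

lemma redp_zero : redp A p (0 : W.Point) = 0 := rfl

lemma redp_some (hW1 : W.a₁ = 0) (hW2 : W.a₂ = 0) (hW3 : W.a₃ = 0) (hW4 : W.a₄ = 0) (hW6 : W.a₆ = (A : ℚ)) (hp3 : p % 3 = 2) (hp2 : p ≠ 2) (hB : ((A : ZMod p)) ≠ 0)
    {x y : ℚ} (h : W.Nonsingular x y) (hx : PInt p x) (hy : PInt p y) :
    redp A p (.some _ _ h) =
      .some _ _ (Ebar_nonsingular _ hp3 hp2 hB (cast_equation hW1 hW2 hW3 hW4 hW6 hx hy h.1)) := by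
  classical
  rw [show redp A p (.some _ _ h) =
    (if hh : (Ebar (p := p) ((A : ZMod p))).Nonsingular (x : ZMod p) (y : ZMod p)
     then Affine.Point.some _ _ hh else 0) from rfl, dif_pos]


lemma Ebar_addX (B : ZMod p) (x₁ x₂ L : ZMod p) :
    (Ebar B).addX x₁ x₂ L = L ^ 2 - x₁ - x₂ := by
  simp [Affine.addX, Ebar]

lemma Ebar_addY (B : ZMod p) (x₁ x₂ y₁ L : ZMod p) :
    (Ebar B).addY x₁ x₂ y₁ L = -(L * ((Ebar B).addX x₁ x₂ L - x₁) + y₁) := by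
  simp [Affine.addY, Affine.negAddY, Affine.negY, Ebar]

lemma WQ_addX (hW1 : W.a₁ = 0) (hW2 : W.a₂ = 0) (x₁ x₂ L : ℚ) :
    W.addX x₁ x₂ L = L ^ 2 - x₁ - x₂ := by
  simp [Affine.addX, hW1, hW2]

lemma WQ_addY (hW1 : W.a₁ = 0) (hW3 : W.a₃ = 0) (x₁ x₂ y₁ L : ℚ) :
    W.addY x₁ x₂ y₁ L = -(L * (W.addX x₁ x₂ L - x₁) + y₁) := by
  simp [Affine.addY, Affine.negAddY, Affine.negY, hW1, hW3]

lemma WQ_slope_tangent (hW1 : W.a₁ = 0) (hW2 : W.a₂ = 0) (hW3 : W.a₃ = 0) (hW4 : W.a₄ = 0)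
    {x₁ y₁ : ℚ} (hy : y₁ ≠ W.negY x₁ y₁) :
    W.slope x₁ x₁ y₁ y₁ = 3 * x₁ ^ 2 / (y₁ + y₁) := by
  rw [Affine.slope_of_Y_ne rfl hy, WQ_negY hW1 hW3, hW1, hW2, hW4]
  ring_nf

lemma Ebar_slope_tangent (B : ZMod p) {x₁ y₁ : ZMod p} (hy : y₁ ≠ (Ebar B).negY x₁ y₁) :
    (Ebar B).slope x₁ x₁ y₁ y₁ = 3 * x₁ ^ 2 / (y₁ + y₁) := by
  rw [Affine.slope_of_Y_ne rfl hy, Ebar_negY]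
  simp only [Ebar]
  ring_nf

lemma redp_add (hW1 : W.a₁ = 0) (hW2 : W.a₂ = 0) (hW3 : W.a₃ = 0) (hW4 : W.a₄ = 0)
    (hW6 : W.a₆ = (A : ℚ)) (hp3 : p % 3 = 2) (hp2 : p ≠ 2) (hB : ((A : ZMod p)) ≠ 0)
    {x₁ y₁ x₂ y₂ : ℚ} (h₁ : W.Nonsingular x₁ y₁) (h₂ : W.Nonsingular x₂ y₂)
    (hx₁ : PInt p x₁) (hy₁ : PInt p y₁) (hx₂ : PInt p x₂) (hy₂ : PInt p y₂)
    (hy₁n : ¬ (p : ℤ) ∣ y₁.num)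
    (hcase : (x₁ = x₂ ∧ y₁ = y₂) ∨ (x₁ ≠ x₂ ∧ ¬ (p : ℤ) ∣ (x₁ - x₂).num)) :
    redp A p (Affine.Point.some _ _ h₁ + Affine.Point.some _ _ h₂) =
      redp A p (Affine.Point.some _ _ h₁) + redp A p (Affine.Point.some _ _ h₂) := by
  have hY1 : (y₁ : ZMod p) ≠ 0 := cast_ne_zero hy₁ hy₁n
  rcases hcase with ⟨hx, hy⟩ | ⟨hxne, hxden⟩
  · subst hx; subst hy
    have hy1q : y₁ ≠ 0 := fun h0 => hY1 (by rw [h0]; simp)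
    have hyne : y₁ ≠ W.negY x₁ y₁ := by
      rw [WQ_negY hW1 hW3]; intro hc; apply hy1q; linarith
    have hEyne : (y₁ : ZMod p) ≠ (Ebar ((A : ZMod p))).negY (x₁ : ZMod p) (y₁ : ZMod p) := by
      rw [Ebar_negY]; intro hc
      have h2y : (2 : ZMod p) * (y₁ : ZMod p) = 0 := by linear_combination hc
      rcases mul_eq_zero.mp h2y with hc' | hc'
      exacts [two_ne_zero' hp2 hc', hY1 hc']
    set l := W.slope x₁ x₁ y₁ y₁ with hldef
    have hl : l = 3 * x₁ ^ 2 / (y₁ + y₁) := WQ_slope_tangent hW1 hW2 hW3 hW4 hyne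
    have hlden : ¬ (p : ℤ) ∣ (y₁ + y₁).num := by
      intro hd
      have h0 : ((y₁ + y₁ : ℚ) : ZMod p) = 0 := cast_eq_zero_of_dvd_num hd
      rw [cast_add hy₁ hy₁] at h0
      have h2y : (2 : ZMod p) * (y₁ : ZMod p) = 0 := by linear_combination h0
      rcases mul_eq_zero.mp h2y with hc' | hc'
      exacts [two_ne_zero' hp2 hc', hY1 hc']
    have hPl : PInt p l := hl ▸ ((pint_three.mul (hx₁.pow 2)).div hlden)
    have hcastl : ((l : ℚ) : ZMod p) =
        (Ebar ((A : ZMod p))).slope (x₁ : ZMod p) (x₁ : ZMod p) (y₁ : ZMod p) (y₁ : ZMod p) := by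
      rw [Ebar_slope_tangent _ hEyne, hl, cast_div (pint_three.mul (hx₁.pow 2)) hlden,
        cast_mul pint_three (hx₁.pow 2), cast_pow hx₁ 2, cast_add hy₁ hy₁]
      norm_num
    have hX3 : W.addX x₁ x₁ l = l ^ 2 - x₁ - x₁ := WQ_addX hW1 hW2 x₁ x₁ l
    have hPX3 : PInt p (W.addX x₁ x₁ l) := hX3 ▸ (((hPl.pow 2).sub hx₁).sub hx₁)
    have hY3 : W.addY x₁ x₁ y₁ l = -(l * (W.addX x₁ x₁ l - x₁) + y₁) := WQ_addY hW1 hW3 x₁ x₁ y₁ l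
    have hPY3 : PInt p (W.addY x₁ x₁ y₁ l) :=
      hY3 ▸ ((hPl.mul (hPX3.sub hx₁)).add hy₁).neg
    have hcastX : ((W.addX x₁ x₁ l : ℚ) : ZMod p) =
        (Ebar ((A : ZMod p))).addX (x₁ : ZMod p) (x₁ : ZMod p)
          ((Ebar ((A : ZMod p))).slope (x₁ : ZMod p) (x₁ : ZMod p) (y₁ : ZMod p) (y₁ : ZMod p)) := by
      rw [hX3, cast_sub ((hPl.pow 2).sub hx₁) hx₁, cast_sub (hPl.pow 2) hx₁, cast_pow hPl 2,
        hcastl, Ebar_addX]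
    have hcastY : ((W.addY x₁ x₁ y₁ l : ℚ) : ZMod p) =
        (Ebar ((A : ZMod p))).addY (x₁ : ZMod p) (x₁ : ZMod p) (y₁ : ZMod p)
          ((Ebar ((A : ZMod p))).slope (x₁ : ZMod p) (x₁ : ZMod p) (y₁ : ZMod p) (y₁ : ZMod p)) := by
      rw [hY3, Ebar_addY, Rat.cast_neg, cast_add (hPl.mul (hPX3.sub hx₁)) hy₁,
        cast_mul hPl (hPX3.sub hx₁), cast_sub hPX3 hx₁, hcastl, hcastX]
    rw [Affine.Point.add_of_Y_ne hyne,
      redp_some hW1 hW2 hW3 hW4 hW6 hp3 hp2 hB _ hPX3 hPY3,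
      redp_some hW1 hW2 hW3 hW4 hW6 hp3 hp2 hB h₁ hx₁ hy₁,
      Affine.Point.add_of_Y_ne hEyne]
    exact some_congr hcastX hcastY _ _
  · have hXne : (x₁ : ZMod p) ≠ (x₂ : ZMod p) := by
      intro hc
      apply cast_ne_zero (hx₁.sub hx₂) hxden
      rw [cast_sub hx₁ hx₂, hc, sub_self]
    set l := W.slope x₁ x₂ y₁ y₂ with hldef
    have hl : l = (y₁ - y₂) / (x₁ - x₂) := Affine.slope_of_X_ne hxne
    have hPl : PInt p l := hl ▸ ((hy₁.sub hy₂).div hxden)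
    have hcastl : ((l : ℚ) : ZMod p) =
        (Ebar ((A : ZMod p))).slope (x₁ : ZMod p) (x₂ : ZMod p) (y₁ : ZMod p) (y₂ : ZMod p) := by
      rw [Affine.slope_of_X_ne hXne, hl, cast_div (hy₁.sub hy₂) hxden,
        cast_sub hy₁ hy₂, cast_sub hx₁ hx₂]
    have hX3 : W.addX x₁ x₂ l = l ^ 2 - x₁ - x₂ := WQ_addX hW1 hW2 x₁ x₂ l
    have hPX3 : PInt p (W.addX x₁ x₂ l) := hX3 ▸ (((hPl.pow 2).sub hx₁).sub hx₂)
    have hY3 : W.addY x₁ x₂ y₁ l = -(l * (W.addX x₁ x₂ l - x₁) + y₁) := WQ_addY hW1 hW3 x₁ x₂ y₁ l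
    have hPY3 : PInt p (W.addY x₁ x₂ y₁ l) :=
      hY3 ▸ ((hPl.mul (hPX3.sub hx₁)).add hy₁).neg
    have hcastX : ((W.addX x₁ x₂ l : ℚ) : ZMod p) =
        (Ebar ((A : ZMod p))).addX (x₁ : ZMod p) (x₂ : ZMod p)
          ((Ebar ((A : ZMod p))).slope (x₁ : ZMod p) (x₂ : ZMod p) (y₁ : ZMod p) (y₂ : ZMod p)) := by
      rw [hX3, cast_sub ((hPl.pow 2).sub hx₁) hx₂, cast_sub (hPl.pow 2) hx₁, cast_pow hPl 2,
        hcastl, Ebar_addX]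
    have hcastY : ((W.addY x₁ x₂ y₁ l : ℚ) : ZMod p) =
        (Ebar ((A : ZMod p))).addY (x₁ : ZMod p) (x₂ : ZMod p) (y₁ : ZMod p)
          ((Ebar ((A : ZMod p))).slope (x₁ : ZMod p) (x₂ : ZMod p) (y₁ : ZMod p) (y₂ : ZMod p)) := by
      rw [hY3, Ebar_addY, Rat.cast_neg, cast_add (hPl.mul (hPX3.sub hx₁)) hy₁,
        cast_mul hPl (hPX3.sub hx₁), cast_sub hPX3 hx₁, hcastl, hcastX]
    rw [Affine.Point.add_of_X_ne hxne,
      redp_some hW1 hW2 hW3 hW4 hW6 hp3 hp2 hB _ hPX3 hPY3,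
      redp_some hW1 hW2 hW3 hW4 hW6 hp3 hp2 hB h₁ hx₁ hy₁,
      redp_some hW1 hW2 hW3 hW4 hW6 hp3 hp2 hB h₂ hx₂ hy₂,
      Affine.Point.add_of_X_ne hXne]
    exact some_congr hcastX hcastY _ _

lemma redp_neg (hW1 : W.a₁ = 0) (hW2 : W.a₂ = 0) (hW3 : W.a₃ = 0) (hW4 : W.a₄ = 0)
    (hW6 : W.a₆ = (A : ℚ)) (hp3 : p % 3 = 2) (hp2 : p ≠ 2) (hB : ((A : ZMod p)) ≠ 0)
    {x₁ y₁ : ℚ} (h₁ : W.Nonsingular x₁ y₁) (hx₁ : PInt p x₁) (hy₁ : PInt p y₁) :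
    redp A p (-(Affine.Point.some _ _ h₁)) = -(redp A p (Affine.Point.some _ _ h₁)) := by
  rw [Affine.Point.neg_some, redp_some hW1 hW2 hW3 hW4 hW6 hp3 hp2 hB _ hx₁
      (by rw [WQ_negY hW1 hW3]; exact hy₁.neg),
    redp_some hW1 hW2 hW3 hW4 hW6 hp3 hp2 hB h₁ hx₁ hy₁, Affine.Point.neg_some]
  refine some_congr rfl ?_ _ _
  rw [WQ_negY hW1 hW3, Ebar_negY, Rat.cast_neg]


def ptx {W : Affine ℚ} : W.Point → ℚ
  | .zero => 0
  | @Affine.Point.some _ _ _ x _ _ => x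

def pty {W : Affine ℚ} : W.Point → ℚ
  | .zero => 0
  | @Affine.Point.some _ _ _ _ y _ => y

lemma pt_spec {W : Affine ℚ} (P : W.Point) (hP : P ≠ 0) :
    ∃ h : W.Nonsingular (ptx P) (pty P), P = .some _ _ h := by
  cases P with
  | zero => exact absurd rfl hP
  | some _ _ h => exact ⟨h, rfl⟩

lemma no_big_torsion {A : ℤ} {W : Affine ℚ}
    (hW1 : W.a₁ = 0) (hW2 : W.a₂ = 0) (hW3 : W.a₃ = 0) (hW4 : W.a₄ = 0) (hW6 : W.a₆ = (A : ℚ))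
    (hA : A ≠ 0) {q : ℕ} (hq : q.Prime) (hq5 : 5 ≤ q)
    (P : W.Point) (hP : addOrderOf P = q) : False := by
  have hq0 : q • P = 0 := by rw [← hP]; exact addOrderOf_nsmul_eq_zero P
  have hsm : ∀ j : ℕ, ¬ q ∣ j → j • P ≠ 0 := by
    intro j hj h0
    exact hj (hP ▸ addOrderOf_dvd_iff_nsmul_eq_zero.mpr h0)
  have hndvd : ∀ j : ℕ, 1 ≤ j → j ≤ q - 1 → ¬ q ∣ j := by
    intro j h1 h2 hd
    have := Nat.le_of_dvd (by omega) hd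
    omega
  have hyne0 : ∀ j : ℕ, ¬ q ∣ j → pty (j • P) ≠ 0 := by
    intro j hj hy0
    obtain ⟨h, heq⟩ := pt_spec (j • P) (hsm j hj)
    have hsum : j • P + j • P = 0 := by
      rw [heq]
      exact Affine.Point.add_of_Y_eq rfl (by rw [WQ_negY hW1 hW3, hy0, neg_zero])
    have h2j : (2 * j) • P = 0 := by
      rw [mul_comm, mul_nsmul, two_nsmul]; exact hsum
    have := hP ▸ addOrderOf_dvd_iff_nsmul_eq_zero.mpr h2j
    rcases (Nat.Prime.dvd_mul hq).mp this with hc | hc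
    · have := Nat.le_of_dvd (by norm_num) hc; omega
    · exact hj hc
  have hxne : ∀ j : ℕ, 2 ≤ j → j ≤ q - 2 → ptx (j • P) ≠ ptx (1 • P) := by
    intro j h2 hq2 hxeq
    have hjd : ¬ q ∣ j := hndvd j (by omega) (by omega)
    have h1d : ¬ q ∣ 1 := hndvd 1 (by omega) (by omega)
    obtain ⟨hj', heqj⟩ := pt_spec (j • P) (hsm j hjd)
    obtain ⟨h1', heq1⟩ := pt_spec (1 • P) (hsm 1 h1d)
    rcases Affine.Y_eq_of_X_eq hj'.1 h1'.1 hxeq with hyeq | hyeq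
    · have hpt : j • P = 1 • P := by
        rw [heqj, heq1]; exact some_congr hxeq hyeq _ _
      have : ((j - 1) + 1) • P = 1 • P := by rw [show j - 1 + 1 = j by omega]; exact hpt
      rw [succ_nsmul, one_smul] at this
      have h0 : (j - 1) • P = 0 := by
        have hcan : (j - 1) • P + P = 0 + P := by rw [this, zero_add]
        exact add_right_cancel hcan
      have := hP ▸ addOrderOf_dvd_iff_nsmul_eq_zero.mpr h0
      have := Nat.le_of_dvd (by omega) this
      omega
    · have hpt : j • P = -(1 • P) := by
        rw [heqj, heq1, Affine.Point.neg_some]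
        exact some_congr hxeq hyeq _ _
      have h0 : (j + 1) • P = 0 := by
        rw [succ_nsmul, hpt, one_smul]
        exact neg_add_cancel P
      have := hP ▸ addOrderOf_dvd_iff_nsmul_eq_zero.mpr h0
      have := Nat.le_of_dvd (by omega) this
      omega
  -- the bound M
  set S₁ := Finset.Icc 1 (q - 1) with hS₁
  set S₂ := Finset.Icc 2 (q - 2) with hS₂
  set f₁ : ℕ → ℕ := fun j => (ptx (j • P)).den * ((pty (j • P)).den * (pty (j • P)).num.natAbs)
    with hf₁
  set f₂ : ℕ → ℕ := fun j => ((ptx (j • P)) - (ptx (1 • P))).num.natAbs with hf₂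
  set M : ℕ := 6 * A.natAbs * S₁.prod f₁ * S₂.prod f₂ with hM
  have hf₁ne : ∀ j ∈ S₁, f₁ j ≠ 0 := by
    intro j hj
    rw [hS₁, Finset.mem_Icc] at hj
    have : pty (j • P) ≠ 0 := hyne0 j (hndvd j hj.1 hj.2)
    simp only [hf₁]
    exact mul_ne_zero (Rat.den_ne_zero _) (mul_ne_zero (Rat.den_ne_zero _)
      (by simpa [Int.natAbs_ne_zero] using Rat.num_ne_zero.mpr this))
  have hf₂ne : ∀ j ∈ S₂, f₂ j ≠ 0 := by
    intro j hj
    rw [hS₂, Finset.mem_Icc] at hj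
    have : ptx (j • P) - ptx (1 • P) ≠ 0 := sub_ne_zero_of_ne (hxne j hj.1 hj.2)
    simp only [hf₂]
    simpa [Int.natAbs_ne_zero] using Rat.num_ne_zero.mpr this
  have hM0 : M ≠ 0 := by
    rw [hM]
    refine mul_ne_zero (mul_ne_zero (mul_ne_zero (by norm_num) ?_) ?_) ?_
    · simpa using hA
    · rw [Finset.prod_ne_zero_iff]; exact hf₁ne
    · rw [Finset.prod_ne_zero_iff]; exact hf₂ne
  -- choose the prime p
  have hco : Nat.Coprime 3 q := (Nat.coprime_primes (by norm_num) hq).mpr (by omega)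
  obtain ⟨c, hc3, hcq⟩ := Nat.chineseRemainder hco 2 1
  haveI : NeZero (3 * q) := ⟨by positivity⟩
  have hunit : IsUnit ((c : ℕ) : ZMod (3 * q)) := by
    rw [ZMod.isUnit_iff_coprime]
    refine Nat.Coprime.mul_right ?_ ?_
    · have h3c : ¬ (3 : ℕ) ∣ c := by
        intro hd
        have : c % 3 = 0 := (Nat.dvd_iff_mod_eq_zero).mp hd
        have : c % 3 = 2 % 3 := hc3
        omega
      exact (Nat.coprime_comm.mp ((Nat.Prime.coprime_iff_not_dvd (by norm_num)).mpr h3c))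
    · have hqc : ¬ q ∣ c := by
        intro hd
        have h0 : c % q = 0 := (Nat.dvd_iff_mod_eq_zero).mp hd
        have h1 : c % q = 1 % q := hcq
        have : (1 : ℕ) % q = 1 := Nat.mod_eq_of_lt (by omega)
        omega
      exact (Nat.coprime_comm.mp ((Nat.Prime.coprime_iff_not_dvd hq).mpr hqc))
  obtain ⟨p, hpgt, hpp, hpc⟩ := Nat.forall_exists_prime_gt_and_eq_mod hunit (max M (3 * q))
  haveI : Fact p.Prime := ⟨hpp⟩
  have hpmax1 : M < p := lt_of_le_of_lt (le_max_left _ _) hpgt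
  have hpmax2 : 3 * q < p := lt_of_le_of_lt (le_max_right _ _) hpgt
  have hmodeq : p ≡ c [MOD 3 * q] := (ZMod.natCast_eq_natCast_iff p c (3 * q)).mp hpc
  have hp3 : p % 3 = 2 := by
    have h3 : p ≡ 2 [MOD 3] := ((hmodeq.of_dvd ⟨q, rfl⟩).trans hc3)
    have : p % 3 = 2 % 3 := h3
    omega
  have hpq1 : p % q = 1 := by
    have hqd : q ∣ 3 * q := ⟨3, by ring⟩
    have h1 : p ≡ 1 [MOD q] := ((hmodeq.of_dvd hqd).trans hcq)
    have : p % q = 1 % q := h1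
    have h1q : (1:ℕ) % q = 1 := Nat.mod_eq_of_lt (by omega)
    omega
  have hp2 : p ≠ 2 := by omega
  have hpM : ∀ m : ℕ, m ≠ 0 → m ∣ M → ¬ p ∣ m := by
    intro m hm0 hmM hpm
    have h1 : p ≤ m := Nat.le_of_dvd (by omega) hpm
    have h2 : m ≤ M := Nat.le_of_dvd (by omega) hmM
    omega
  have hA' : ((A : ZMod p)) ≠ 0 := by
    rw [Ne, ZMod.intCast_zmod_eq_zero_iff_dvd, Int.natCast_dvd]
    exact hpM A.natAbs (by simpa using hA) ⟨6 * S₁.prod f₁ * S₂.prod f₂, by rw [hM]; ring⟩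
  have hprod₁dvd : S₁.prod f₁ ∣ M := ⟨6 * A.natAbs * S₂.prod f₂, by rw [hM]; ring⟩
  have hprod₂dvd : S₂.prod f₂ ∣ M := ⟨6 * A.natAbs * S₁.prod f₁, by rw [hM]; ring⟩
  have hmem₁ : ∀ j : ℕ, 1 ≤ j → j ≤ q - 1 → j ∈ S₁ := by
    intro j h1 h2; rw [hS₁, Finset.mem_Icc]; exact ⟨h1, h2⟩
  have hx_pint : ∀ j : ℕ, 1 ≤ j → j ≤ q - 1 → PInt p (ptx (j • P)) := by
    intro j h1 h2 hd
    refine hpM (ptx (j • P)).den (Rat.den_ne_zero _) ?_ hd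
    exact dvd_trans (dvd_trans (dvd_mul_right _ _) (Finset.dvd_prod_of_mem f₁ (hmem₁ j h1 h2)))
      hprod₁dvd
  have hy_pint : ∀ j : ℕ, 1 ≤ j → j ≤ q - 1 → PInt p (pty (j • P)) := by
    intro j h1 h2 hd
    refine hpM (pty (j • P)).den (Rat.den_ne_zero _) ?_ hd
    exact dvd_trans (dvd_trans (dvd_mul_of_dvd_right (dvd_mul_right _ _) _)
      (Finset.dvd_prod_of_mem f₁ (hmem₁ j h1 h2))) hprod₁dvd
  have hy_num : ∀ j : ℕ, 1 ≤ j → j ≤ q - 1 → ¬ (p : ℤ) ∣ (pty (j • P)).num := by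
    intro j h1 h2 hd
    rw [Int.natCast_dvd] at hd
    refine hpM (pty (j • P)).num.natAbs
      (by simpa [Int.natAbs_ne_zero] using Rat.num_ne_zero.mpr (hyne0 j (hndvd j h1 h2))) ?_ hd
    exact dvd_trans (dvd_trans (dvd_mul_of_dvd_right (dvd_mul_left _ _) _)
      (Finset.dvd_prod_of_mem f₁ (hmem₁ j h1 h2))) hprod₁dvd
  have hsub_num : ∀ j : ℕ, 2 ≤ j → j ≤ q - 2 → ¬ (p : ℤ) ∣ ((ptx (j • P)) - ptx (1 • P)).num := by
    intro j h1 h2 hd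
    rw [Int.natCast_dvd] at hd
    refine hpM _ (hf₂ne j (by rw [hS₂, Finset.mem_Icc]; exact ⟨h1, h2⟩)) ?_ hd
    exact dvd_trans (Finset.dvd_prod_of_mem f₂ (by rw [hS₂, Finset.mem_Icc]; exact ⟨h1, h2⟩))
      hprod₂dvd
  -- the induction
  have key : ∀ j : ℕ, 1 ≤ j → j ≤ q - 1 → redp A p (j • P) = j • redp A p P := by
    intro j h1 h2
    induction j, h1 using Nat.le_induction with
    | base => rw [one_smul, one_smul]
    | succ j hj ih =>
      have hj2 : j ≤ q - 2 := by omega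
      have hjd : ¬ q ∣ j := hndvd j (by omega) (by omega)
      have h1d : ¬ q ∣ 1 := hndvd 1 (by omega) (by omega)
      obtain ⟨hj', heqj⟩ := pt_spec (j • P) (hsm j hjd)
      obtain ⟨h1', heq1⟩ := pt_spec (1 • P) (hsm 1 h1d)
      have hcase : (ptx (j • P) = ptx (1 • P) ∧ pty (j • P) = pty (1 • P)) ∨
          (ptx (j • P) ≠ ptx (1 • P) ∧ ¬ (p : ℤ) ∣ ((ptx (j • P)) - ptx (1 • P)).num) := by
        rcases eq_or_ne j 1 with rfl | hj1
        · exact Or.inl ⟨rfl, rfl⟩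
        · exact Or.inr ⟨hxne j (by omega) hj2, hsub_num j (by omega) hj2⟩
      have hadd := redp_add hW1 hW2 hW3 hW4 hW6 hp3 hp2 hA' hj' h1'
        (hx_pint j (by omega) (by omega)) (hy_pint j (by omega) (by omega))
        (hx_pint 1 (by omega) (by omega)) (hy_pint 1 (by omega) (by omega))
        (hy_num j (by omega) (by omega)) hcase
      calc redp A p ((j + 1) • P) = redp A p (j • P + P) := by rw [succ_nsmul]
      _ = redp A p (Affine.Point.some _ _ hj' + Affine.Point.some _ _ h1') := by
          rw [← heqj, ← heq1, one_smul]
      _ = redp A p (Affine.Point.some _ _ hj') + redp A p (Affine.Point.some _ _ h1') := hadd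
      _ = redp A p (j • P) + redp A p (1 • P) := by rw [← heqj, ← heq1]
      _ = j • redp A p P + redp A p P := by rw [ih (by omega), one_smul]
      _ = (j + 1) • redp A p P := (succ_nsmul _ j).symm
  -- conclusion
  have h1d : ¬ q ∣ 1 := hndvd 1 (by omega) (by omega)
  obtain ⟨h1', heq1⟩ := pt_spec (1 • P) (hsm 1 h1d)
  have hPsome : P = Affine.Point.some _ _ h1' := ((one_smul ℕ P).symm).trans heq1
  have hRaff : redp A p P =
      Affine.Point.some _ _ (Ebar_nonsingular _ hp3 hp2 hA'
        (cast_equation hW1 hW2 hW3 hW4 hW6 (hx_pint 1 (by omega) (by omega))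
          (hy_pint 1 (by omega) (by omega)) h1'.1)) := by
    rw [congrArg (redp A p) hPsome]
    exact redp_some hW1 hW2 hW3 hW4 hW6 hp3 hp2 hA' h1'
      (hx_pint 1 (by omega) (by omega)) (hy_pint 1 (by omega) (by omega))
  have hRne : redp A p P ≠ 0 := by
    rw [hRaff]; exact Affine.Point.some_ne_zero _
  have hneg : (q - 1) • P = -P := by
    have : ((q - 1) + 1) • P = 0 := by rw [show q - 1 + 1 = q by omega]; exact hq0
    rw [succ_nsmul] at this
    exact eq_neg_of_add_eq_zero_left this
  have hnegred : redp A p (-P) = - redp A p P := by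
    calc redp A p (-P) = redp A p (-(Affine.Point.some _ _ h1')) :=
          congrArg (fun Q => redp A p (-Q)) hPsome
    _ = -(redp A p (Affine.Point.some _ _ h1')) := redp_neg hW1 hW2 hW3 hW4 hW6 hp3 hp2 hA' h1'
          (hx_pint 1 (by omega) (by omega)) (hy_pint 1 (by omega) (by omega))
    _ = - redp A p P := by rw [← congrArg (redp A p) hPsome]
  have hqR : q • redp A p P = 0 := by
    have hsplit : q • redp A p P = (q - 1) • redp A p P + redp A p P := by
      conv_lhs => rw [show q = (q - 1) + 1 from by omega]
      rw [succ_nsmul]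
    rw [hsplit, ← key (q-1) (by omega) (by omega), hneg, hnegred]
    exact neg_add_cancel _
  have hdvdq : addOrderOf (redp A p P) ∣ q := addOrderOf_dvd_iff_nsmul_eq_zero.mpr hqR
  have hordq : addOrderOf (redp A p P) = q := by
    rcases (Nat.Prime.eq_one_or_self_of_dvd hq _ hdvdq) with h1 | h1
    · exact absurd (AddMonoid.addOrderOf_eq_one_iff.mp h1) hRne
    · exact h1
  have hcard : q ∣ p + 1 := by
    have := addOrderOf_dvd_natCard (redp A p P)
    rwa [hordq, card_Ebar _ hp3 hp2 hA'] at this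
  have hmod : (p + 1) % q = 0 := (Nat.dvd_iff_mod_eq_zero).mp hcard
  have : (p + 1) % q = 2 := by
    rw [Nat.add_mod, hpq1, Nat.mod_eq_of_lt (show (1:ℕ) < q by omega)]
    exact Nat.mod_eq_of_lt (by omega)
  omega

end Curve

end TT

namespace TT
lemma rat_cube_eq_int {x : ℚ} {N : ℤ} (h : x ^ 3 = (N : ℚ)) : ∃ t : ℤ, (t : ℚ) = x ∧ t ^ 3 = N := by
  obtain ⟨t, ht⟩ := int_of_pow (by norm_num : (3:ℕ) ≠ 0) h
  refine ⟨t, ht, ?_⟩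
  have : ((t ^ 3 : ℤ) : ℚ) = ((N : ℤ) : ℚ) := by push_cast; rw [ht]; exact h
  exact_mod_cast this

lemma rat_sq_eq_int {x : ℚ} {N : ℤ} (h : x ^ 2 = (N : ℚ)) : ∃ t : ℤ, (t : ℚ) = x ∧ t ^ 2 = N := by
  obtain ⟨t, ht⟩ := int_of_pow (by norm_num : (2:ℕ) ≠ 0) h
  refine ⟨t, ht, ?_⟩
  have : ((t ^ 2 : ℤ) : ℚ) = ((N : ℤ) : ℚ) := by push_cast; rw [ht]; exact h
  exact_mod_cast this

lemma order_three_x {A : ℤ} {W : WeierstrassCurve.Affine ℚ}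
    (hW1 : W.a₁ = 0) (hW2 : W.a₂ = 0) (hW3 : W.a₃ = 0) (hW4 : W.a₄ = 0)
    {x y : ℚ} (h : W.Nonsingular x y) (hy : y ≠ 0)
    (h3 : (WeierstrassCurve.Affine.Point.some _ _ h : W.Point) + .some _ _ h = -(.some _ _ h))
    (heqn : y ^ 2 = x ^ 3 + (A : ℚ)) :
    x * (x ^ 3 + 4 * (A : ℚ)) = 0 := by
  have hyy : y + y ≠ 0 := by intro hc; apply hy; linarith
  have hyne : y ≠ W.negY x y := by
    rw [WQ_negY hW1 hW3]; intro hc; apply hy; linarith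
  rw [WeierstrassCurve.Affine.Point.add_of_Y_ne hyne,
    WeierstrassCurve.Affine.Point.neg_some] at h3
  have hxeq : W.addX x x (W.slope x x y y) = x := congrArg ptx h3
  have hslope : W.slope x x y y = 3 * x ^ 2 / (y + y) :=
    WQ_slope_tangent hW1 hW2 hW3 hW4 hyne
  rw [WQ_addX hW1 hW2, hslope] at hxeq
  have e1' : (3 * x ^ 2) ^ 2 = 3 * x * (y + y) ^ 2 := by
    field_simp at hxeq
    linear_combination hxeq
  linear_combination (-1/3 : ℚ) * e1' + (-4 * x) * heqn

end TT

open WeierstrassCurve TT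

/-- Let `d` be a squarefree integer and `k` a positive cubefree integer with `d ≠ -3`,
`k ≠ 2`, and not both `d = 1` and `k = 1`. Then the group of rational points of the
elliptic curve `y² = x³ - 432·d³·k²` over `ℚ` has trivial torsion: the only rational
point of finite order is the point at infinity. -/
theorem torsion_trivial (d : ℤ) (hd : Squarefree d) (k : ℕ) (hk : 0 < k)
    (hkcf : ∀ p : ℕ, p.Prime → ¬ p ^ 3 ∣ k)
    (hd3 : d ≠ -3) (hk2 : k ≠ 2) (hdk : ¬ (d = 1 ∧ k = 1)) :
    let W : WeierstrassCurve.Affine ℚ :=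
      { a₁ := 0, a₂ := 0, a₃ := 0, a₄ := 0, a₆ := -432 * (d : ℚ) ^ 3 * (k : ℚ) ^ 2 }
    ∀ P : W.Point, IsOfFinAddOrder P → P = 0 := by
  intro W P hfin
  by_contra hne
  have hd0 : d ≠ 0 := hd.ne_zero
  have hk0 : k ≠ 0 := hk.ne'
  set A : ℤ := -432 * d ^ 3 * (k : ℤ) ^ 2 with hAdef
  have hW1 : W.a₁ = 0 := rfl
  have hW2 : W.a₂ = 0 := rfl
  have hW3 : W.a₃ = 0 := rfl
  have hW4 : W.a₄ = 0 := rfl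
  have hW6 : W.a₆ = (A : ℚ) := by
    show -432 * (d : ℚ) ^ 3 * (k : ℚ) ^ 2 = ((-432 * d ^ 3 * (k : ℤ) ^ 2 : ℤ) : ℚ)
    push_cast
    ring
  have hA0 : A ≠ 0 := by
    rw [hAdef]
    have h1 : (d : ℤ) ^ 3 ≠ 0 := pow_ne_zero _ hd0
    have h2 : ((k : ℤ)) ^ 2 ≠ 0 := pow_ne_zero _ (by exact_mod_cast hk0)
    exact mul_ne_zero (mul_ne_zero (by norm_num) h1) h2
  set n := addOrderOf P with hn
  have hn0 : 0 < n := IsOfFinAddOrder.addOrderOf_pos hfin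
  have hn1 : n ≠ 1 := fun h => hne (AddMonoid.addOrderOf_eq_one_iff.mp h)
  set q := n.minFac with hqdef
  have hqp : q.Prime := Nat.minFac_prime hn1
  have hqd : q ∣ n := Nat.minFac_dvd n
  set Q : W.Point := (n / q) • P with hQdef
  have hQq : q • Q = 0 := by
    rw [hQdef, smul_smul, Nat.mul_div_cancel' hqd, hn]
    exact addOrderOf_nsmul_eq_zero P
  have hQne : Q ≠ 0 := by
    intro h0
    have hdvd : n ∣ n / q := hn ▸ addOrderOf_dvd_iff_nsmul_eq_zero.mpr h0
    have hpos : 0 < n / q := Nat.div_pos (Nat.minFac_le hn0) hqp.pos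
    have hle : n ≤ n / q := Nat.le_of_dvd hpos hdvd
    have hlt : n / q < n := Nat.div_lt_self hn0 hqp.one_lt
    omega
  have hOQ : addOrderOf Q = q := by
    have hdvd : addOrderOf Q ∣ q := addOrderOf_dvd_iff_nsmul_eq_zero.mpr hQq
    rcases hqp.eq_one_or_self_of_dvd _ hdvd with h1 | h1
    · exact absurd (AddMonoid.addOrderOf_eq_one_iff.mp h1) hQne
    · exact h1
  obtain ⟨hQ, hQeq⟩ := pt_spec Q hQne
  have heqn : (pty Q) ^ 2 = (ptx Q) ^ 3 + (A : ℚ) :=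
    (WQ_equation_iff hW1 hW2 hW3 hW4 hW6 _ _).mp hQ.1
  rcases eq_or_ne q 2 with hq2 | hqne2
  · -- 2-torsion
    have hy0 : pty Q = 0 := by
      by_contra hy0
      have hyne : pty Q ≠ W.negY (ptx Q) (pty Q) := by
        rw [WQ_negY hW1 hW3]; intro hc; apply hy0; linarith
      have hsum : Q + Q = 0 := by
        rw [← two_nsmul, ← hq2]; exact hQq
      rw [hQeq, Affine.Point.add_of_Y_ne hyne] at hsum
      exact Affine.Point.some_ne_zero _ hsum
    have hx3 : (ptx Q) ^ 3 = ((432 * d ^ 3 * (k : ℤ) ^ 2 : ℤ) : ℚ) := by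
      rw [hy0] at heqn
      push_cast
      push_cast [hAdef] at heqn
      linarith
    obtain ⟨t, -, ht3⟩ := rat_cube_eq_int hx3
    exact hk2 (k_eq_two hd hk hkcf ht3)
  rcases eq_or_ne q 3 with hq3 | hqne3
  · -- 3-torsion
    have hyne0 : pty Q ≠ 0 := by
      intro hy0
      have hsum : Q + Q = 0 := by
        rw [hQeq]
        exact Affine.Point.add_of_Y_eq rfl (by rw [WQ_negY hW1 hW3, hy0, neg_zero])
      have h2Q : (2 : ℕ) • Q = 0 := by rw [two_nsmul]; exact hsum
      have := hOQ ▸ addOrderOf_dvd_iff_nsmul_eq_zero.mpr h2Q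
      rw [hq3] at this
      omega
    have h2Q : Q + Q = -Q := by
      have h3 : (2 + 1 : ℕ) • Q = 0 := by rw [show (2 + 1 : ℕ) = 3 from rfl, ← hq3]; exact hQq
      rw [succ_nsmul, two_nsmul] at h3
      exact eq_neg_of_add_eq_zero_left h3
    rw [hQeq] at h2Q
    have hfac : (ptx Q) * ((ptx Q) ^ 3 + 4 * (A : ℚ)) = 0 :=
      order_three_x hW1 hW2 hW3 hW4 hQ hyne0 h2Q heqn
    generalize hgx : ptx Q = x at hfac heqn
    generalize hgy : pty Q = y at heqn hyne0
    have hdQ : ((d : ℚ)) ≠ 0 := by exact_mod_cast hd0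
    have hkQ : ((k : ℚ)) ≠ 0 := by exact_mod_cast hk0
    rcases mul_eq_zero.mp hfac with hx0 | hx4
    · -- x = 0 : y² = A, so (y/4k)² = -27 d³
      have hz : (y / (4 * (k : ℚ))) ^ 2 = ((-27 * d ^ 3 : ℤ) : ℚ) := by
        rw [hx0] at heqn
        push_cast [hAdef] at heqn
        push_cast
        field_simp
        linear_combination heqn
      obtain ⟨t, -, ht2⟩ := rat_sq_eq_int hz
      exact hd3 (d_eq_neg_three hd (by linarith [ht2]))
    · -- x³ = -4A = 1728 d³ k²
      have hx3 : x ^ 3 = ((1728 * d ^ 3 * (k : ℤ) ^ 2 : ℤ) : ℚ) := by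
        push_cast [hAdef] at hx4 ⊢
        linarith
      have hz : (x / (12 * (d : ℚ))) ^ 3 = (((k : ℤ) ^ 2 : ℤ) : ℚ) := by
        push_cast
        field_simp
        push_cast at hx3
        linear_combination hx3
      obtain ⟨c, hc, hc3⟩ := rat_cube_eq_int hz
      obtain ⟨hk1, hc1⟩ := k_eq_one hk hkcf hc3
      have hx12 : x = 12 * (d : ℚ) := by
        rw [hc1] at hc
        push_cast at hc
        field_simp at hc
        linarith
      have hz2 : (y / 36) ^ 2 = ((d ^ 3 : ℤ) : ℚ) := by
        rw [hx12] at heqn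
        push_cast [hAdef, hk1] at heqn
        push_cast
        field_simp
        linear_combination heqn
      obtain ⟨t, -, ht2⟩ := rat_sq_eq_int hz2
      exact hdk ⟨d_eq_one hd ht2, hk1⟩
  · -- q ≥ 5
    have hq5 : 5 ≤ q := by
      have h2 := hqp.two_le
      have h4 : q ≠ 4 := by
        intro h4
        rw [h4] at hqp
        norm_num at hqp
      omega
    exact no_big_torsion hW1 hW2 hW3 hW4 hW6 hA0 hqp hq5 Q hOQ
end

section
/- Let d be a squarefree integer and k a positive cubefree integer. Then -432·d³·k² is a perfect sixth power (i.e., there exists an integer b with -432·d³·k² = b⁶) if and only if d = -3 and k = 2. -/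
private lemma fact_mul_apply {a b : ℕ} (ha : a ≠ 0) (hb : b ≠ 0) (p : ℕ) :
    (a * b).factorization p = a.factorization p + b.factorization p := by
  simp [Nat.factorization_mul ha hb]

private lemma fact_pow_apply (a n p : ℕ) :
    (a ^ n).factorization p = n * a.factorization p := by
  simp [Nat.factorization_pow]

private lemma fact_prime_apply {q : ℕ} (hq : q.Prime) (p : ℕ) :
    q.factorization p = if q = p then 1 else 0 := by
  rw [hq.factorization, Finsupp.single_apply]

/-- For a squarefree integer `d` and a positive cubefree integer `k`, the integer
`-432·d³·k²` is a perfect sixth power if and only if `d = -3` and `k = 2`. -/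
theorem sixth_power_iff (d : ℤ) (hd : Squarefree d) (k : ℕ) (hk : 0 < k)
    (hkcf : ∀ p : ℕ, p.Prime → ¬ p ^ 3 ∣ k) :
    (∃ b : ℤ, -432 * d ^ 3 * (k : ℤ) ^ 2 = b ^ 6) ↔ (d = -3 ∧ k = 2) := by
  constructor
  · rintro ⟨b, hb⟩
    have hd0 : d ≠ 0 := hd.ne_zero
    have he0 : d.natAbs ≠ 0 := Int.natAbs_ne_zero.mpr hd0
    set e := d.natAbs with he
    have hnat : 432 * e ^ 3 * k ^ 2 = b.natAbs ^ 6 := by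
      have := congrArg Int.natAbs hb
      simpa [Int.natAbs_mul, Int.natAbs_pow] using this
    set m := b.natAbs with hm
    have hm0 : m ≠ 0 := by
      intro h
      rw [h] at hnat
      have : 0 < 432 * e ^ 3 * k ^ 2 := by positivity
      omega
    have hek : 432 * e ^ 3 * k ^ 2 = 2 ^ 4 * 3 ^ 3 * (e ^ 3 * k ^ 2) := by ring
    rw [hek] at hnat
    have hesf : Squarefree e := Int.squarefree_natAbs.mpr hd
    have hfe : ∀ p : ℕ, e.factorization p ≤ 1 := fun p => hesf.natFactorization_le_one p
    have hfk : ∀ p : ℕ, p.Prime → k.factorization p ≤ 2 := by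
      intro p hp
      have := hkcf p hp
      rw [Nat.Prime.pow_dvd_iff_le_factorization hp hk.ne'] at this
      omega
    have hfact : ∀ p : ℕ, p.Prime →
        (if p = 2 then 4 else 0) + (if p = 3 then 3 else 0)
          + 3 * e.factorization p + 2 * k.factorization p = 6 * m.factorization p := by
      intro p hp
      have h : (2 ^ 4 * 3 ^ 3 * (e ^ 3 * k ^ 2)).factorization p = (m ^ 6).factorization p := by
        rw [hnat]
      rw [fact_mul_apply (by norm_num) (by positivity), fact_mul_apply (by norm_num) (by norm_num),
        fact_mul_apply (by positivity) (by positivity), fact_pow_apply, fact_pow_apply,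
        fact_pow_apply, fact_pow_apply, fact_pow_apply, fact_prime_apply Nat.prime_two,
        fact_prime_apply Nat.prime_three] at h
      by_cases h2 : p = 2
      · subst h2; norm_num at h ⊢; omega
      · by_cases h3 : p = 3
        · subst h3; norm_num at h ⊢; omega
        · rw [if_neg h2, if_neg h3]
          rw [if_neg (fun hh => h2 hh.symm), if_neg (fun hh => h3 hh.symm)] at h
          omega
    have hp2 := hfact 2 Nat.prime_two
    have hp3 := hfact 3 Nat.prime_three
    simp at hp2 hp3
    have he3 : e = 3 := by
      refine Nat.eq_of_factorization_eq he0 (by norm_num) fun p => ?_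
      rw [Nat.Prime.factorization Nat.prime_three, Finsupp.single_apply]
      by_cases hp : p.Prime
      · by_cases h3 : p = 3
        · subst h3
          have := hfe 3
          have := hfk 3 Nat.prime_three
          simp
          omega
        · have h := hfact p hp
          have := hfe p
          have := hfk p hp
          simp [Ne.symm h3]
          split_ifs at h <;> omega
      · rw [Nat.factorization_eq_zero_of_not_prime _ hp, if_neg]
        rintro rfl; exact hp Nat.prime_three
    have hk2 : k = 2 := by
      refine Nat.eq_of_factorization_eq hk.ne' (by norm_num) fun p => ?_
      rw [Nat.Prime.factorization Nat.prime_two, Finsupp.single_apply]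
      by_cases hp : p.Prime
      · by_cases h2 : p = 2
        · subst h2
          have := hfe 2
          have := hfk 2 Nat.prime_two
          simp
          omega
        · have h := hfact p hp
          have := hfe p
          have := hfk p hp
          simp [Ne.symm h2]
          split_ifs at h <;> omega
      · rw [Nat.factorization_eq_zero_of_not_prime _ hp, if_neg]
        rintro rfl; exact hp Nat.prime_two
    refine ⟨?_, hk2⟩
    rcases Int.natAbs_eq d with h | h <;> rw [← he, he3] at h
    · exfalso
      rw [h, hk2] at hb
      have hpos : (0:ℤ) ≤ b ^ 6 := by positivity
      rw [← hb] at hpos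
      norm_num at hpos
    · exact_mod_cast h
  · rintro ⟨rfl, rfl⟩
    exact ⟨6, by norm_num⟩
end

section
/- Let d be a squarefree integer and k a positive cubefree integer. Then -432·d³·k² is a perfect cube (i.e., there exists an integer b with -432·d³·k² = b³) if and only if k = 2. -/
/-- For a squarefree integer `d` and a positive cubefree integer `k`, the integer
`-432·d³·k²` is a perfect cube if and only if `k = 2`. -/
theorem cube_iff (d : ℤ) (hd : Squarefree d) (k : ℕ) (hk : 0 < k)
    (hkcf : ∀ p : ℕ, p.Prime → ¬ p ^ 3 ∣ k) :
    (∃ b : ℤ, -432 * d ^ 3 * (k : ℤ) ^ 2 = b ^ 3) ↔ k = 2 := by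
  have hd0 : d ≠ 0 := hd.ne_zero
  have hk0 : k ≠ 0 := hk.ne'
  constructor
  · rintro ⟨b, hb⟩
    have hb0 : b ≠ 0 := by
      intro h
      rw [h] at hb
      simp only [zero_pow, mul_eq_zero, pow_eq_zero_iff, OfNat.ofNat_ne_zero,
        ne_eq, not_false_eq_true] at hb
      rcases hb with (h1 | h1) | h1
      · norm_num at h1
      · exact hd0 h1
      · exact hk0 (by exact_mod_cast h1)
    set D := d.natAbs with hDdef
    set n := b.natAbs with hndef
    have hD0 : D ≠ 0 := Int.natAbs_ne_zero.mpr hd0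
    have hn0 : n ≠ 0 := Int.natAbs_ne_zero.mpr hb0
    have key : 432 * D ^ 3 * k ^ 2 = n ^ 3 := by
      have := congrArg Int.natAbs hb
      simpa [Int.natAbs_mul, Int.natAbs_pow] using this
    have hkfac : ∀ p : ℕ, p.Prime → k.factorization p = if p = 2 then 1 else 0 := by
      intro p hp
      have hx2 : k.factorization p ≤ 2 := by
        by_contra hx
        exact hkcf p hp ((hp.pow_dvd_iff_le_factorization hk0).mpr (by omega))
      have hE : (432 : ℕ).factorization p + 3 * D.factorization p
          + 2 * k.factorization p = 3 * n.factorization p := by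
        have := congrArg (fun m => m.factorization p) key
        simpa [Nat.factorization_mul, Nat.factorization_pow, hD0, hk0, hn0,
          mul_ne_zero, pow_ne_zero, Finsupp.add_apply, Finsupp.smul_apply,
          smul_eq_mul] using this
      have h432 : (432 : ℕ).factorization p
          = (if p = 2 then 4 else 0) + (if p = 3 then 3 else 0) := by
        have h4 : (432 : ℕ) = 2 ^ 4 * 3 ^ 3 := by norm_num
        rw [h4, Nat.factorization_mul (by norm_num) (by norm_num),
          Nat.factorization_pow, Nat.factorization_pow, Finsupp.add_apply,
          Finsupp.smul_apply, Finsupp.smul_apply,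
          Nat.Prime.factorization (by norm_num), Nat.Prime.factorization (by norm_num),
          Finsupp.single_apply, Finsupp.single_apply]
        simp only [smul_eq_mul]
        split_ifs <;> omega
      rw [h432] at hE
      rcases eq_or_ne p 2 with h2 | h2
      · subst h2
        norm_num at hE ⊢
        omega
      · rcases eq_or_ne p 3 with h3 | h3
        · subst h3
          norm_num at hE ⊢
          omega
        · simp only [if_neg h2, if_neg h3] at hE ⊢
          omega
    apply Nat.eq_of_factorization_eq hk0 (by norm_num)
    intro p
    by_cases hp : p.Prime
    · rw [hkfac p hp, Nat.Prime.factorization (by norm_num), Finsupp.single_apply]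
      split_ifs <;> omega
    · rw [Nat.factorization_eq_zero_of_not_prime _ hp,
        Nat.factorization_eq_zero_of_not_prime _ hp]
  · rintro rfl
    exact ⟨-12 * d, by push_cast; ring⟩
end
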